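/- For every integer r ≥ 4 there exists a finite simple graph LitGadget_r with r distinguished vertices v₁,…,v_r such that: (1) there is a triangle packing of size 3r − 1 that covers none of v₁,…,v_r; (2) there is exactly one triangle packing of size 3r, and it covers all of v₁,…,v_r; (3) there is no triangle packing of size greater than 3r. -/

import Mathlib

/-- `P` is a triangle packing of `G`: a collection of pairwise vertex-disjoint
triangles, each triangle being given by its set of three pairwise adjacent vertices. -/
def IsTrianglePacking {n : ℕ} (G : SimpleGraph (Fin n)) (P : Finset (Finset (Fin n))) :
    Prop :=
  (∀ t ∈ P, t.card = 3 ∧ ∀ x ∈ t, ∀ y ∈ t, x ≠ y → G.Adj x y) ∧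
    ∀ t ∈ P, ∀ s ∈ P, t ≠ s → Disjoint t s

/-- The packing `P` covers the vertex `x`. -/
def Covers {n : ℕ} (P : Finset (Finset (Fin n))) (x : Fin n) : Prop := ∃ t ∈ P, x ∈ t

/-- membership predicate for the `i`-th triangle: path vertices `i`, `i+1` and apex `6r+i`. -/
def tmem (r i : ℕ) (x : Fin (12*r)) : Prop :=
  x.val = i ∨ x.val = i + 1 ∨ x.val = 6*r + i

instance (r i : ℕ) : DecidablePred (tmem r i) := fun x => by
  unfold tmem; infer_instance

def Tri (r i : ℕ) : Finset (Fin (12*r)) := Finset.univ.filter (tmem r i)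

lemma mem_Tri {r i : ℕ} {x : Fin (12*r)} : x ∈ Tri r i ↔ tmem r i x := by
  simp [Tri]

/-- the gadget graph: edges are pairs inside a common triangle. -/
def LG (r : ℕ) : SimpleGraph (Fin (12*r)) where
  Adj x y := x ≠ y ∧ ∃ i, i < 6*r - 1 ∧ tmem r i x ∧ tmem r i y
  symm := ⟨by
    rintro x y ⟨hxy, i, hi, hx, hy⟩
    exact ⟨hxy.symm, i, hi, hy, hx⟩⟩
  loopless := ⟨fun x h => h.1 rfl⟩

lemma Tri_card {r i : ℕ} (hr : 4 ≤ r) (hi : i < 6*r - 1) : (Tri r i).card = 3 := by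
  have h1 : i < 12*r := by omega
  have h2 : i+1 < 12*r := by omega
  have h3 : 6*r+i < 12*r := by omega
  have he : Tri r i = {⟨i,h1⟩, ⟨i+1,h2⟩, ⟨6*r+i,h3⟩} := by
    ext x
    simp only [mem_Tri, tmem, Finset.mem_insert, Finset.mem_singleton, Fin.ext_iff]
  rw [he, Finset.card_insert_of_notMem (by simp [Fin.ext_iff]; omega),
      Finset.card_insert_of_notMem (by simp [Fin.ext_iff]; omega),
      Finset.card_singleton]

lemma Tri_adj {r i : ℕ} (hi : i < 6*r - 1) :
    ∀ x ∈ Tri r i, ∀ y ∈ Tri r i, x ≠ y → (LG r).Adj x y := by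
  intro x hx y hy hxy
  exact ⟨hxy, i, hi, mem_Tri.1 hx, mem_Tri.1 hy⟩

lemma Tri_disjoint {r i j : ℕ} (hi : i < 6*r - 1) (hj : j < 6*r - 1)
    (h : i + 2 ≤ j ∨ j + 2 ≤ i) : Disjoint (Tri r i) (Tri r j) := by
  rw [Finset.disjoint_left]
  intro x hx hx'
  rw [mem_Tri] at hx hx'
  unfold tmem at hx hx'
  omega

lemma Tri_inj {r i j : ℕ} (hi : i < 6*r - 1) (hj : j < 6*r - 1)
    (h : Tri r i = Tri r j) : i = j := by
  have h1 : (⟨i, by omega⟩ : Fin (12*r)) ∈ Tri r i := by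
    rw [mem_Tri]; unfold tmem; simp
  have h2 : (⟨j, by omega⟩ : Fin (12*r)) ∈ Tri r j := by
    rw [mem_Tri]; unfold tmem; simp
  rw [h] at h1
  rw [← h] at h2
  rw [mem_Tri] at h1 h2
  unfold tmem at h1 h2
  simp only at h1 h2
  omega

/-- every triangle of the gadget graph is one of the `Tri r i`. -/
lemma tri_eq {r : ℕ} (hr : 4 ≤ r) {t : Finset (Fin (12*r))} (h3 : t.card = 3)
    (ha : ∀ x ∈ t, ∀ y ∈ t, x ≠ y → (LG r).Adj x y) :
    ∃ i, i < 6*r - 1 ∧ t = Tri r i := by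
  obtain ⟨x, y, z, hxy, hxz, hyz, rfl⟩ := Finset.card_eq_three.1 h3
  obtain ⟨-, i, hi, hix, hiy⟩ := ha x (by simp) y (by simp) hxy
  obtain ⟨-, j, hj, hjy, hjz⟩ := ha y (by simp) z (by simp) hyz
  obtain ⟨-, k, hk, hkx, hkz⟩ := ha x (by simp) z (by simp) hxz
  have hxy' : x.val ≠ y.val := fun h => hxy (Fin.ext h)
  have hxz' : x.val ≠ z.val := fun h => hxz (Fin.ext h)
  have hyz' : y.val ≠ z.val := fun h => hyz (Fin.ext h)
  have key : ∃ m, m < 6*r - 1 ∧ tmem r m x ∧ tmem r m y ∧ tmem r m z := by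
    rcases le_or_gt (6*r) x.val with hx6 | hx6
    · refine ⟨i, hi, hix, hiy, ?_⟩
      unfold tmem at hix hkx hkz ⊢
      omega
    rcases le_or_gt (6*r) y.val with hy6 | hy6
    · refine ⟨i, hi, hix, hiy, ?_⟩
      unfold tmem at hiy hjy hjz ⊢
      omega
    rcases le_or_gt (6*r) z.val with hz6 | hz6
    · refine ⟨j, hj, ?_, hjy, hjz⟩
      unfold tmem at hjz hkz hkx ⊢
      omega
    exfalso
    unfold tmem at hix hiy hjy hjz hkx hkz
    omega
  obtain ⟨m, hm, hmx, hmy, hmz⟩ := key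
  refine ⟨m, hm, ?_⟩
  have hsub : ({x, y, z} : Finset (Fin (12*r))) ⊆ Tri r m := by
    intro a ha'
    simp only [Finset.mem_insert, Finset.mem_singleton] at ha'
    rcases ha' with rfl | rfl | rfl <;> rw [mem_Tri] <;> assumption
  exact Finset.eq_of_subset_of_card_le hsub
    (le_of_eq ((Tri_card hr hm).trans h3.symm))

/-- structure of an arbitrary packing: it is given by a set of indices that are
pairwise at distance at least 2. -/
lemma packing_struct {r : ℕ} (hr : 4 ≤ r) {Q : Finset (Finset (Fin (12*r)))}
    (hQ : IsTrianglePacking (LG r) Q) :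
    ∃ I : Finset ℕ, (∀ i ∈ I, i < 6*r - 1) ∧ Q = I.image (Tri r) ∧ Q.card = I.card ∧
      ∀ i ∈ I, ∀ j ∈ I, i ≠ j → i + 2 ≤ j ∨ j + 2 ≤ i := by
  classical
  set I := (Finset.range (6*r-1)).filter (fun i => Tri r i ∈ Q) with hI
  have hmem : ∀ i, i ∈ I ↔ i < 6*r - 1 ∧ Tri r i ∈ Q := by
    intro i
    simp [hI, Finset.mem_filter, Finset.mem_range]
  have hbd : ∀ i ∈ I, i < 6*r - 1 := fun i hi => ((hmem i).1 hi).1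
  have hQeq : Q = I.image (Tri r) := by
    ext t
    constructor
    · intro ht
      obtain ⟨i, hi, rfl⟩ := tri_eq hr ((hQ.1 t ht).1) ((hQ.1 t ht).2)
      exact Finset.mem_image.2 ⟨i, (hmem i).2 ⟨hi, ht⟩, rfl⟩
    · intro ht
      obtain ⟨i, hi, rfl⟩ := Finset.mem_image.1 ht
      exact ((hmem i).1 hi).2
  have hsep : ∀ i ∈ I, ∀ j ∈ I, i ≠ j → i + 2 ≤ j ∨ j + 2 ≤ i := by
    intro i hi j hj hij
    have hi' := (hmem i).1 hi
    have hj' := (hmem j).1 hj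
    have hne : Tri r i ≠ Tri r j := fun h => hij (Tri_inj hi'.1 hj'.1 h)
    have hd := hQ.2 _ hi'.2 _ hj'.2 hne
    by_contra hcon
    push_neg at hcon
    rcases (by omega : j = i + 1 ∨ i = j + 1) with h' | h'
    · have hx1 : (⟨i+1, by omega⟩ : Fin (12*r)) ∈ Tri r i := by
        rw [mem_Tri]; unfold tmem; simp
      have hx2 : (⟨i+1, by omega⟩ : Fin (12*r)) ∈ Tri r j := by
        rw [mem_Tri]
        show i+1 = j ∨ i+1 = j+1 ∨ i+1 = 6*r+j
        omega
      exact Finset.disjoint_left.1 hd hx1 hx2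
    · have hx1 : (⟨j+1, by omega⟩ : Fin (12*r)) ∈ Tri r j := by
        rw [mem_Tri]; unfold tmem; simp
      have hx2 : (⟨j+1, by omega⟩ : Fin (12*r)) ∈ Tri r i := by
        rw [mem_Tri]
        show j+1 = i ∨ j+1 = i+1 ∨ j+1 = 6*r+i
        omega
      exact Finset.disjoint_left.1 hd hx2 hx1
  refine ⟨I, hbd, hQeq, ?_, hsep⟩
  rw [hQeq]
  exact Finset.card_image_of_injOn (fun i hi j hj h => Tri_inj (hbd i hi) (hbd j hj) h)

lemma index_card_le {r : ℕ} (hr : 4 ≤ r) {I : Finset ℕ}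
    (hbd : ∀ i ∈ I, i < 6*r - 1)
    (hsep : ∀ i ∈ I, ∀ j ∈ I, i ≠ j → i + 2 ≤ j ∨ j + 2 ≤ i) :
    I.card ≤ 3*r := by
  have hinj : Set.InjOn (· / 2) I := by
    intro i hi j hj h2
    have h2' : i / 2 = j / 2 := h2
    by_contra hne
    rcases hsep i hi j hj hne with h | h <;> omega
  have hsub : I.image (· / 2) ⊆ Finset.range (3*r) := by
    intro m hm
    obtain ⟨i, hi, rfl⟩ := Finset.mem_image.1 hm
    have := hbd i hi
    simp only [Finset.mem_range]
    omega
  calc I.card = (I.image (· / 2)).card := (Finset.card_image_of_injOn hinj).symm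
    _ ≤ (Finset.range (3*r)).card := Finset.card_le_card hsub
    _ = 3*r := Finset.card_range _

lemma index_max {r : ℕ} (hr : 4 ≤ r) {I : Finset ℕ}
    (hbd : ∀ i ∈ I, i < 6*r - 1)
    (hsep : ∀ i ∈ I, ∀ j ∈ I, i ≠ j → i + 2 ≤ j ∨ j + 2 ≤ i)
    (hc : I.card = 3*r) :
    I = (Finset.range (3*r)).image (fun k => 2*k) := by
  have hinj : Set.InjOn (· / 2) I := by
    intro i hi j hj h2
    have h2' : i / 2 = j / 2 := h2
    by_contra hne
    rcases hsep i hi j hj hne with h | h <;> omega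
  have hsub : I.image (· / 2) ⊆ Finset.range (3*r) := by
    intro m hm
    obtain ⟨i, hi, rfl⟩ := Finset.mem_image.1 hm
    have := hbd i hi
    simp only [Finset.mem_range]
    omega
  have heq : I.image (· / 2) = Finset.range (3*r) := by
    apply Finset.eq_of_subset_of_card_le hsub
    rw [Finset.card_image_of_injOn hinj, hc, Finset.card_range]
  have hsurj : ∀ k, k < 3*r → ∃ i ∈ I, i / 2 = k := by
    intro k hk
    have : k ∈ I.image (· / 2) := by rw [heq]; exact Finset.mem_range.2 hk
    obtain ⟨i, hi, h⟩ := Finset.mem_image.1 this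
    exact ⟨i, hi, h⟩
  have main : ∀ d k, k + d + 1 = 3*r → ∀ j ∈ I, j / 2 = k → j = 2*k := by
    intro d
    induction d with
    | zero =>
      intro k hk j hj hj2
      have := hbd j hj
      omega
    | succ d ih =>
      intro k hk j hj hj2
      obtain ⟨j', hj', hj'2⟩ := hsurj (k+1) (by omega)
      have hje : j' = 2*(k+1) := ih (k+1) (by omega) j' hj' hj'2
      have hne : j ≠ j' := by omega
      rcases hsep j hj j' hj' hne with h | h <;> omega
  ext i
  simp only [Finset.mem_image, Finset.mem_range]
  constructor
  · intro hi
    have hb := hbd i hi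
    refine ⟨i / 2, by omega, ?_⟩
    have := main (3*r - 1 - i/2) (i/2) (by omega) i hi rfl
    omega
  · rintro ⟨k, hk, rfl⟩
    obtain ⟨i, hi, hi2⟩ := hsurj k hk
    have := main (3*r - 1 - k) k (by omega) i hi hi2
    subst this
    exact hi

theorem exists_literal_gadget (r : ℕ) (hr : 4 ≤ r) :
    ∃ (n : ℕ) (G : SimpleGraph (Fin n)) (d : Fin r → Fin n),
      Function.Injective d ∧
      (∃ P : Finset (Finset (Fin n)), IsTrianglePacking G P ∧ P.card = 3 * r - 1 ∧
        ∀ i : Fin r, ¬ Covers P (d i)) ∧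
      (∃ P : Finset (Finset (Fin n)), IsTrianglePacking G P ∧ P.card = 3 * r ∧
        (∀ Q : Finset (Finset (Fin n)), IsTrianglePacking G Q → Q.card = 3 * r →
          Q = P) ∧
        ∀ i : Fin r, Covers P (d i)) ∧
      ∀ Q : Finset (Finset (Fin n)), IsTrianglePacking G Q → Q.card ≤ 3 * r := by
  classical
  refine ⟨12*r, LG r, fun i => ⟨6*r + 2*i.val, by have := i.isLt; omega⟩, ?_, ?_, ?_, ?_⟩
  · -- injectivity of d
    intro i j h
    have : 6*r + 2*i.val = 6*r + 2*j.val := by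
      simpa [Fin.ext_iff] using h
    exact Fin.ext (by omega)
  · -- the (3r-1)-packing avoiding all distinguished vertices
    refine ⟨(Finset.range (3*r-1)).image (fun k => Tri r (2*k+1)), ⟨?_, ?_⟩, ?_, ?_⟩
    · intro t ht
      obtain ⟨k, hk, rfl⟩ := Finset.mem_image.1 ht
      rw [Finset.mem_range] at hk
      exact ⟨Tri_card hr (by omega), Tri_adj (by omega)⟩
    · intro t ht s hs hts
      obtain ⟨k, hk, rfl⟩ := Finset.mem_image.1 ht
      obtain ⟨l, hl, rfl⟩ := Finset.mem_image.1 hs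
      rw [Finset.mem_range] at hk hl
      have hkl : k ≠ l := fun h => hts (by rw [h])
      exact Tri_disjoint (by omega) (by omega) (by omega)
    · rw [Finset.card_image_of_injOn, Finset.card_range]
      intro k hk l hl h
      rw [Finset.mem_coe, Finset.mem_range] at hk hl
      have := Tri_inj (r := r) (by omega) (by omega) h
      omega
    · rintro i ⟨t, ht, hmem⟩
      obtain ⟨k, hk, rfl⟩ := Finset.mem_image.1 ht
      rw [Finset.mem_range] at hk
      rw [mem_Tri] at hmem
      unfold tmem at hmem
      simp only at hmem
      omega
  · -- the unique maximum packing
    refine ⟨(Finset.range (3*r)).image (fun k => Tri r (2*k)), ⟨?_, ?_⟩, ?_, ?_, ?_⟩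
    · intro t ht
      obtain ⟨k, hk, rfl⟩ := Finset.mem_image.1 ht
      rw [Finset.mem_range] at hk
      exact ⟨Tri_card hr (by omega), Tri_adj (by omega)⟩
    · intro t ht s hs hts
      obtain ⟨k, hk, rfl⟩ := Finset.mem_image.1 ht
      obtain ⟨l, hl, rfl⟩ := Finset.mem_image.1 hs
      rw [Finset.mem_range] at hk hl
      have hkl : k ≠ l := fun h => hts (by rw [h])
      exact Tri_disjoint (by omega) (by omega) (by omega)
    · rw [Finset.card_image_of_injOn, Finset.card_range]
      intro k hk l hl h
      rw [Finset.mem_coe, Finset.mem_range] at hk hl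
      have := Tri_inj (r := r) (by omega) (by omega) h
      omega
    · -- uniqueness
      intro Q hQ hQc
      obtain ⟨I, hbd, hQeq, hcard, hsep⟩ := packing_struct hr hQ
      have hI : I = (Finset.range (3*r)).image (fun k => 2*k) :=
        index_max hr hbd hsep (by omega)
      rw [hQeq, hI, Finset.image_image]
      rfl
    · -- covers all distinguished vertices
      intro i
      refine ⟨Tri r (2*i.val), Finset.mem_image.2 ⟨i.val, Finset.mem_range.2 (by have := i.isLt; omega), rfl⟩, ?_⟩
      rw [mem_Tri]
      exact Or.inr (Or.inr rfl)
  · -- no packing larger than 3r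
    intro Q hQ
    obtain ⟨I, hbd, hQeq, hcard, hsep⟩ := packing_struct hr hQ
    rw [hcard]
    exact index_card_le hr hbd hsep
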